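/- If gcd(n, 2^d - 1) > 1 is not required but n < 2^d, then combining the bounds: for every d ≥ 2, |Q_max(4,d)| ≤ 2^d. -/
import Mathlib


/-- A square `q` lies on the `(n,d)`-board: all coordinates between `1` and `n`. -/
def onBoard (n d : ℕ) (q : Fin d → ℤ) : Prop := ∀ i, 1 ≤ q i ∧ q i ≤ (n : ℤ)

/-- Queen `q1` attacks queen `q2`: there are `m : ℤ` and a nonzero `ε ∈ {-1,0,1}^d`
with `q1 i = ε i * m + q2 i` for all `i`. -/
def attacks {d : ℕ} (q1 q2 : Fin d → ℤ) : Prop :=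
  ∃ (m : ℤ) (ε : Fin d → ℤ), (∀ i, ε i = -1 ∨ ε i = 0 ∨ ε i = 1) ∧ ε ≠ 0 ∧
    ∀ i, q1 i = ε i * m + q2 i

/-- A set of queens is mutually non-attacking. -/
def nonAttacking {d : ℕ} (Q : Set (Fin d → ℤ)) : Prop :=
  ∀ q1 ∈ Q, ∀ q2 ∈ Q, q1 ≠ q2 → ¬ attacks q1 q2

/-- `maxQueens n d = |Q_max(n,d)|`, the maximum cardinality of a set of
mutually non-attacking queens on the `(n,d)`-board. -/
noncomputable def maxQueens (n d : ℕ) : ℕ :=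
  sSup {k | ∃ Q : Finset (Fin d → ℤ), Q.card = k ∧ (∀ q ∈ Q, onBoard n d q) ∧
    nonAttacking (Q : Set (Fin d → ℤ))}

/-- `|Q_max(4,d)| ≤ 2^d` for all `d ≥ 2`. -/
lemma attacks_of_same_parity {d : ℕ} (q1 q2 : Fin d → ℤ)
    (h1 : onBoard 4 d q1) (h2 : onBoard 4 d q2) (hne : q1 ≠ q2)
    (hpar : ∀ i, ((q1 i : ZMod 2) = (q2 i : ZMod 2))) : attacks q1 q2 := by
  have hdvd : ∀ i, 2 ∣ q1 i - q2 i := by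
    intro i
    have := (ZMod.intCast_eq_intCast_iff' (q1 i) (q2 i) 2).mp (hpar i)
    exact Int.ModEq.dvd this.symm
  refine ⟨2, fun i => (q1 i - q2 i) / 2, ?_, ?_, ?_⟩
  · intro i
    obtain ⟨c, hc⟩ := hdvd i
    have hb1 := h1 i
    have hb2 := h2 i
    have hc' : (q1 i - q2 i) / 2 = c := by omega
    dsimp only
    rw [hc']
    omega
  · intro h
    apply hne
    funext i
    have := congrFun h i
    simp only [Pi.zero_apply] at this
    obtain ⟨c, hc⟩ := hdvd i
    have hc' : (q1 i - q2 i) / 2 = c := by omega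
    rw [hc'] at this
    omega
  · intro i
    obtain ⟨c, hc⟩ := hdvd i
    have hc' : (q1 i - q2 i) / 2 = c := by omega
    dsimp only
    rw [hc']
    omega

theorem maxQueens_four_bound (d : ℕ) (hd : 2 ≤ d) : maxQueens 4 d ≤ 2 ^ d := by
  apply csSup_le
  · exact ⟨0, ∅, by simp [nonAttacking]⟩
  · rintro k ⟨Q, hcard, hboard, hatt⟩
    subst hcard
    have hinj : Set.InjOn (fun q : Fin d → ℤ => fun i => ((q i : ZMod 2))) Q := by
      intro a ha b hb hab
      by_contra hne
      exact hatt a ha b hb hne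
        (attacks_of_same_parity a b (hboard a ha) (hboard b hb) hne
          (fun i => congrFun hab i))
    calc Q.card ≤ Fintype.card (Fin d → ZMod 2) := by
          have := Finset.card_le_card_of_injOn
            (fun q : Fin d → ℤ => fun i => ((q i : ZMod 2)))
            (fun a _ => Finset.mem_univ _) hinj
          simpa using this
      _ = 2 ^ d := by simp
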